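/- For every natural number i > 0, ∫_0^{2/(3^i+1)} f(t) dt = (2^(i-1) / 9^i) · ((5·3^i + 1) / (2·3^i + 2)) · (1 / (1 + 2^(i-1)/9^i)). -/

import Mathlib

open intervalIntegral Set

theorem bourbaki_stmt (f : ℝ → ℝ)
    (hcont : ContinuousOn f (Set.Icc 0 1))
    (h0 : f 0 = 0) (h1 : f 1 = 1)
    (hw1 : ∀ x ∈ Set.Icc (0:ℝ) 1, f (x / 3) = (2/3) * f x)
    (hw2 : ∀ x ∈ Set.Icc (0:ℝ) 1, f ((2 - x) / 3) = (1/3) * (1 + f x))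
    (hw3 : ∀ x ∈ Set.Icc (0:ℝ) 1, f ((2 + x) / 3) = 1/3 + (2/3) * f x) :
    ∀ i : ℕ, 0 < i → ∫ t in (0:ℝ)..(2 / (3 ^ i + 1)), f t = (2 ^ (i - 1) / 9 ^ i) * ((5 * 3 ^ i + 1) / (2 * 3 ^ i + 2)) * (1 / (1 + 2 ^ (i - 1) / 9 ^ i)) := by
  set F : ℝ → ℝ := fun a => ∫ t in (0:ℝ)..a, f t with hF
  have h01 : (0:ℝ) ∈ Icc (0:ℝ) 1 := by constructor <;> norm_num
  have h11 : (1:ℝ) ∈ Icc (0:ℝ) 1 := by constructor <;> norm_num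
  have hInt : ∀ a b : ℝ, a ∈ Icc (0:ℝ) 1 → b ∈ Icc (0:ℝ) 1 →
      IntervalIntegrable f MeasureTheory.volume a b := fun a b ha hb =>
    (hcont.mono (uIcc_subset_Icc ha hb)).intervalIntegrable
  -- Lemma A : F (a/3) = (2/9) F a
  have hA : ∀ a ∈ Icc (0:ℝ) 1, F (a/3) = (2/9) * F a := by
    intro a ha
    have hsub : ∫ x in (0:ℝ)..a, f (x/3) = (3:ℝ) • ∫ x in ((0:ℝ)/3)..(a/3), f x :=
      integral_comp_div (a := 0) (b := a) (c := 3) f (by norm_num)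
    have hcongr : ∫ x in (0:ℝ)..a, f (x/3) = ∫ x in (0:ℝ)..a, (2/3) * f x :=
      intervalIntegral.integral_congr fun x hx => hw1 x (uIcc_subset_Icc h01 ha hx)
    have h2 : ∫ x in (0:ℝ)..a, (2/3) * f x = (2/3) * F a := by
      rw [intervalIntegral.integral_const_mul]
    rw [hcongr, h2, smul_eq_mul] at hsub
    have h3 : (0:ℝ)/3 = 0 := by norm_num
    rw [h3] at hsub
    have : F (a/3) = (1/3) * ((2/3) * F a) := by
      rw [hsub]; ring
    rw [this]; ring
  -- Lemma B : ∫_{(2-a)/3}^{2/3} f = (1/9)(a + F a)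
  have hB : ∀ a ∈ Icc (0:ℝ) 1, (∫ t in ((2-a)/3)..(2/3:ℝ), f t) = (1/9) * (a + F a) := by
    intro a ha
    have hsub1 : ∫ x in (0:ℝ)..a, f ((2-x)/3) = ∫ x in (2-a)..(2-(0:ℝ)), f (x/3) :=
      integral_comp_sub_left (a := 0) (b := a) (fun y => f (y/3)) 2
    have hsub2 : ∫ x in (2-a)..(2:ℝ), f (x/3) = (3:ℝ) • ∫ x in ((2-a)/3)..((2:ℝ)/3), f x :=
      integral_comp_div (c := 3) f (by norm_num)
    have hcongr : ∫ x in (0:ℝ)..a, f ((2-x)/3) = ∫ x in (0:ℝ)..a, (1/3) * (1 + f x) :=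
      intervalIntegral.integral_congr fun x hx => hw2 x (uIcc_subset_Icc h01 ha hx)
    have h2 : ∫ x in (0:ℝ)..a, (1/3) * (1 + f x) = (1/3) * (a + F a) := by
      rw [intervalIntegral.integral_const_mul,
        intervalIntegral.integral_add intervalIntegrable_const (hInt 0 a h01 ha)]
      simp [hF]
    have key : (1/3) * (a + F a) = (3:ℝ) * ∫ t in ((2-a)/3)..(2/3:ℝ), f t := by
      rw [← h2, ← hcongr, hsub1]
      norm_num at hsub2 ⊢
    linarith
  -- Lemma C : ∫_{2/3}^{(2+a)/3} f = a/9 + (2/9) F a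
  have hC : ∀ a ∈ Icc (0:ℝ) 1, (∫ t in (2/3:ℝ)..((2+a)/3), f t) = a/9 + (2/9) * F a := by
    intro a ha
    have hsub1 : ∫ x in (0:ℝ)..a, f ((x+2)/3) = ∫ x in ((0:ℝ)+2)..(a+2), f (x/3) :=
      integral_comp_add_right (a := 0) (b := a) (fun y => f (y/3)) 2
    have hsub2 : ∫ x in (2:ℝ)..(a+2), f (x/3) = (3:ℝ) • ∫ x in ((2:ℝ)/3)..((a+2)/3), f x :=
      integral_comp_div (c := 3) f (by norm_num)
    have hcongr : ∫ x in (0:ℝ)..a, f ((x+2)/3) = ∫ x in (0:ℝ)..a, (1/3 + (2/3) * f x) := by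
      refine intervalIntegral.integral_congr fun x hx => ?_
      have := hw3 x (uIcc_subset_Icc h01 ha hx)
      rw [show (x+2)/3 = (2+x)/3 by ring, this]
    have h2 : ∫ x in (0:ℝ)..a, (1/3 + (2/3) * f x) = a/3 + (2/3) * F a := by
      rw [intervalIntegral.integral_add intervalIntegrable_const
        ((hInt 0 a h01 ha).const_mul _), intervalIntegral.integral_const_mul]
      simp [hF]
      ring
    have key : a/3 + (2/3) * F a = (3:ℝ) * ∫ t in (2/3:ℝ)..((2+a)/3), f t := by
      rw [← h2, ← hcongr, hsub1]
      rw [show (0:ℝ)+2 = 2 by norm_num, hsub2, smul_eq_mul,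
        show (a+2)/3 = (2+a)/3 by ring]
    linarith
  -- F 1 = 1/2
  have hF1 : F 1 = 1/2 := by
    have h13 : (1/3:ℝ) ∈ Icc (0:ℝ) 1 := by constructor <;> norm_num
    have h23 : (2/3:ℝ) ∈ Icc (0:ℝ) 1 := by constructor <;> norm_num
    have e1 : F (1/3) + (∫ t in (1/3:ℝ)..(2/3:ℝ), f t) = F (2/3) :=
      integral_add_adjacent_intervals (hInt 0 (1/3) h01 h13) (hInt (1/3) (2/3) h13 h23)
    have e2 : F (2/3) + (∫ t in (2/3:ℝ)..(1:ℝ), f t) = F 1 :=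
      integral_add_adjacent_intervals (hInt 0 (2/3) h01 h23) (hInt (2/3) 1 h23 h11)
    have b1 := hA 1 h11
    have b2 := hB 1 h11
    have b3 := hC 1 h11
    rw [show (2-(1:ℝ))/3 = 1/3 by norm_num] at b2
    rw [show (2+(1:ℝ))/3 = 1 by norm_num] at b3
    have b1' : F (1/3) = (2/9) * F 1 := by rw [show (1:ℝ)/3 = 1/3 by norm_num] at b1; exact b1
    linarith
  -- F (2/3) = 5/18
  have hF23 : F (2/3) = 5/18 := by
    have h13 : (1/3:ℝ) ∈ Icc (0:ℝ) 1 := by constructor <;> norm_num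
    have h23 : (2/3:ℝ) ∈ Icc (0:ℝ) 1 := by constructor <;> norm_num
    have e1 : F (1/3) + (∫ t in (1/3:ℝ)..(2/3:ℝ), f t) = F (2/3) :=
      integral_add_adjacent_intervals (hInt 0 (1/3) h01 h13) (hInt (1/3) (2/3) h13 h23)
    have b1 := hA 1 h11
    have b2 := hB 1 h11
    rw [show (2-(1:ℝ))/3 = 1/3 by norm_num] at b2
    rw [show (1:ℝ)/3 = 1/3 by norm_num] at b1
    rw [hF1] at b1 b2
    linarith
  -- iterated A
  have hAk : ∀ k : ℕ, ∀ a ∈ Icc (0:ℝ) 1, F (a / 3^k) = (2/9)^k * F a := by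
    intro k
    induction k with
    | zero => intro a ha; simp
    | succ n ih =>
      intro a ha
      have ha3 : a/3 ∈ Icc (0:ℝ) 1 := by
        constructor
        · linarith [ha.1]
        · linarith [ha.2]
      have : a / 3^(n+1) = (a/3) / 3^n := by
        rw [pow_succ]; ring
      rw [this, ih (a/3) ha3, hA a ha, pow_succ]
      ring
  intro i hi
  obtain ⟨k, rfl⟩ : ∃ k, i = k + 1 := ⟨i - 1, (Nat.succ_pred_eq_of_pos hi).symm⟩
  simp only [Nat.add_sub_cancel]
  have hT : (0:ℝ) < 3^(k+1) := by positivity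
  have hT3 : (3:ℝ) ≤ 3^(k+1) := by
    calc (3:ℝ) = 3^1 := by norm_num
    _ ≤ 3^(k+1) := by
      apply pow_le_pow_right₀ (by norm_num)
      omega
  have hD : (0:ℝ) < 3^(k+1) + 1 := by linarith
  set x : ℝ := 2 / (3^(k+1) + 1) with hx
  set b : ℝ := 2 * 3^k / (3^(k+1) + 1) with hb
  have hxm : x ∈ Icc (0:ℝ) 1 := by
    constructor
    · positivity
    · rw [div_le_one hD]; linarith
  have hbm : b ∈ Icc (0:ℝ) 1 := by
    constructor
    · positivity
    · rw [div_le_one hD]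
      have : (3:ℝ)^(k+1) = 3 * 3^k := by rw [pow_succ]; ring
      nlinarith [pow_pos (show (0:ℝ) < 3 by norm_num) k]
  have hbx : b / 3^k = x := by
    rw [hb, hx]
    field_simp
  have h2x : (2 - x)/3 = b := by
    rw [hb, hx, pow_succ]
    field_simp
    ring
  have hFx : F x = (2/9)^k * F b := by rw [← hbx]; exact hAk k b hbm
  have h23 : (2/3:ℝ) ∈ Icc (0:ℝ) 1 := by constructor <;> norm_num
  have e : F b + (∫ t in b..(2/3:ℝ), f t) = F (2/3) :=
    integral_add_adjacent_intervals (hInt 0 b h01 hbm) (hInt b (2/3) hbm h23)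
  have bB := hB x hxm
  rw [h2x] at bB
  rw [bB, hF23] at e
  -- e : F b + (1/9)*(x + F x) = 5/18 ; hFx : F x = (2/9)^k * F b
  have hP : (0:ℝ) < (2/9)^k := by positivity
  have hFb : F b = (9/2)^k * F x := by
    rw [hFx]
    rw [show ((9:ℝ)/2)^k * ((2/9)^k * F b) = ((9/2)*(2/9))^k * F b by rw [mul_pow]; ring]
    norm_num
  rw [hFb] at e
  -- e : (9/2)^k * F x + (1/9)*(x + F x) = 5/18
  -- solve for F x and match RHS
  have hPk : ((9:ℝ)/2)^k = 9^k / 2^k := by rw [div_pow]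
  have h2k : (0:ℝ) < 2^k := by positivity
  have h9k : (0:ℝ) < 9^k := by positivity
  have hval : F x = (2^k * (5 * 3^(k+1) + 1)) / ((2 * 3^(k+1) + 2) * (9 * 9^k + 2^k)) := by
    have hxval : x = 2 / (3^(k+1) + 1) := hx
    have hden : (0:ℝ) < (9:ℝ)^k / 2^k + 1/9 := by positivity
    have e' : F x * ((9:ℝ)^k / 2^k + 1/9) = 5/18 - x/9 := by
      rw [hPk] at e; linarith
    have : F x = (5/18 - x/9) / ((9:ℝ)^k / 2^k + 1/9) := by
      field_simp at e' ⊢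
      linarith
    rw [this, hxval]
    rw [div_eq_div_iff (by positivity) (by positivity)]
    field_simp
    ring
  have h9k1 : ((9:ℝ)^(k+1)) = 9 * 9^k := by rw [pow_succ]; ring
  have hne1 : ((2:ℝ) * 3^(k+1) + 2) ≠ 0 := by positivity
  have hne2 : ((9:ℝ) * 9^k + 2^k) ≠ 0 := by positivity
  have hne3 : ((1:ℝ) + 2^k/(9 * 9^k)) ≠ 0 := by positivity
  show F x = _
  rw [hval, h9k1]
  field_simp
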